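/- Let (k, P⃗, p⃗) and (k', P⃗', p⃗') be partition parameters on M = [m], and let Δ = Σ_{i: |P_i|>0} Σ_{i': |P'_{i'}|>0} p_i p'_{i'} |P_i ∩ P'_{i'}| / (|P_i|·|P'_{i'}|). If U and U' are independent samples from the uniform distributions PC(k, P⃗, p⃗) and PC(k', P⃗', p⃗') respectively, then for all ε > 0, Pr(|U ∩ U'| < Δ − εm) ≤ exp(−ε²(m − Δ)/3). -/

import Mathlib

open Finset

lemma binom_nat (n p : ℕ) (hp : p ≤ n) :
    ∀ s j, j + s = n → Nat.choose j p * n ^ s ≤ Nat.choose n p * (n - p) ^ s := by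
  intro s
  induction s with
  | zero => intro j hj; simp [show j = n by omega]
  | succ s ih =>
    intro j hj
    have hstep : Nat.choose j p * n ≤ Nat.choose (j + 1) p * (n - p) := by
      rcases le_or_gt p j with hpj | hpj
      · have hid : Nat.choose j p * (j + 1) = Nat.choose (j + 1) p * (j + 1 - p) :=
          Nat.choose_mul_succ_eq j p
        have hj1 : j + 1 ≤ n := by omega
        -- multiply target by (j+1) and cancel
        have key : Nat.choose j p * n * (j + 1) ≤ Nat.choose (j + 1) p * (n - p) * (j + 1) := by
          have h1 : Nat.choose j p * n * (j + 1) = n * (Nat.choose (j+1) p * (j + 1 - p)) := by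
            rw [← hid]; ring
          have h2 : n * (Nat.choose (j+1) p * (j + 1 - p)) ≤ Nat.choose (j + 1) p * (n - p) * (j + 1) := by
            have : n * (j + 1 - p) ≤ (n - p) * (j + 1) := by
              zify [hp, show p ≤ j + 1 by omega]
              nlinarith [hj1, hpj]
            calc n * (Nat.choose (j+1) p * (j + 1 - p)) = Nat.choose (j+1) p * (n * (j + 1 - p)) := by ring
              _ ≤ Nat.choose (j+1) p * ((n - p) * (j + 1)) := Nat.mul_le_mul_left _ this
              _ = Nat.choose (j + 1) p * (n - p) * (j + 1) := by ring
          omega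
        exact Nat.le_of_mul_le_mul_right key (by omega)
      · simp [Nat.choose_eq_zero_of_lt hpj]
    calc Nat.choose j p * n ^ (s + 1) = (Nat.choose j p * n) * n ^ s := by ring
      _ ≤ (Nat.choose (j + 1) p * (n - p)) * n ^ s := Nat.mul_le_mul_right _ hstep
      _ = (n - p) * (Nat.choose (j + 1) p * n ^ s) := by ring
      _ ≤ (n - p) * (Nat.choose n p * (n - p) ^ s) := Nat.mul_le_mul_left _ (ih (j+1) (by omega))
      _ = Nat.choose n p * (n - p) ^ (s + 1) := by ring

lemma binom_real (n p j : ℕ) (hp : p ≤ n) (hj : j ≤ n) (hn : 0 < n) :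
    (Nat.choose j p : ℝ) ≤ (Nat.choose n p : ℝ) * (1 - (p : ℝ) / n) ^ (n - j) := by
  have h := binom_nat n p hp (n - j) j (by omega)
  have hcast : (Nat.choose j p : ℝ) * (n : ℝ) ^ (n - j) ≤
      (Nat.choose n p : ℝ) * ((n : ℝ) - p) ^ (n - j) := by
    have := (Nat.cast_le (α := ℝ)).2 h
    push_cast [Nat.cast_sub hp] at this
    exact_mod_cast this
  have hnpos : (0:ℝ) < (n:ℝ) ^ (n - j) := by positivity
  have h1 : (1 - (p:ℝ)/n) = ((n:ℝ) - p) / n := by field_simp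
  rw [h1, div_pow, ← mul_div_assoc, le_div_iff₀ hnpos]
  exact hcast

lemma log_pade {x : ℝ} (hx : 0 ≤ x) : 2 * x / (2 + x) ≤ Real.log (1 + x) := by
  set f : ℝ → ℝ := fun y => (2 + y) * Real.log (1 + y) - 2 * y with hf
  have hderiv : ∀ y : ℝ, 0 < 1 + y →
      HasDerivAt f (Real.log (1 + y) + (2 + y) / (1 + y) - 2) y := by
    intro y hy
    have h1 : HasDerivAt (fun y : ℝ => 1 + y) 1 y := by
      simpa using (hasDerivAt_id y).const_add 1
    have hlog : HasDerivAt (fun y : ℝ => Real.log (1 + y)) ((1 + y)⁻¹) y := by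
      have h := (Real.hasDerivAt_log (ne_of_gt hy)).comp y h1; rw [mul_one] at h; exact h
    have h2 : HasDerivAt (fun y : ℝ => 2 + y) 1 y := by
      simpa using (hasDerivAt_id y).const_add 2
    have h3 : HasDerivAt (fun y : ℝ => (2 + y) * Real.log (1 + y))
        (1 * Real.log (1 + y) + (2 + y) * (1 + y)⁻¹) y := h2.mul hlog
    have h4 : HasDerivAt (fun y : ℝ => 2 * y) 2 y := by
      simpa using (hasDerivAt_id y).const_mul 2
    have := h3.sub h4
    exact this.congr_deriv (by ring)
  have hmono : MonotoneOn f (Set.Ici 0) := by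
    apply monotoneOn_of_deriv_nonneg (convex_Ici 0)
    · intro y hy
      exact ((hderiv y (by simp at hy; linarith)).continuousAt).continuousWithinAt
    · intro y hy
      simp only [interior_Ici, Set.mem_Ioi] at hy
      exact (hderiv y (by linarith)).differentiableAt.differentiableWithinAt
    · intro y hy
      simp only [interior_Ici, Set.mem_Ioi] at hy
      rw [(hderiv y (by linarith)).deriv]
      have hy1 : (0:ℝ) < 1 + y := by linarith
      have hlb : 1 - (1 + y)⁻¹ ≤ Real.log (1 + y) := by
        have := Real.log_le_sub_one_of_pos (x := (1 + y)⁻¹) (by positivity)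
        rw [Real.log_inv] at this
        linarith
      have h5 : (2 + y) / (1 + y) - 2 = -(y / (1 + y)) := by field_simp; ring
      have h6 : (1:ℝ) - (1 + y)⁻¹ = y / (1 + y) := by field_simp; ring
      linarith [hlb, h5, h6]
  have h0 : f 0 = 0 := by simp [hf]
  have := hmono (Set.mem_Ici.2 le_rfl) (Set.mem_Ici.2 hx) hx
  rw [h0] at this
  simp only [hf] at this
  -- this : 0 ≤ (2+x) log(1+x) - 2x
  rw [div_le_iff₀ (by linarith : (0:ℝ) < 2 + x)]
  nlinarith [this]

lemma lemmaW_binary {ι : Type*} [DecidableEq ι] (N : Finset ι) (p : ℕ) (hp : p ≤ N.card)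
    (c : ι → ℝ) (hc0 : ∀ z, 0 ≤ c z) (hc1 : ∀ z, c z ≤ 1)
    (hbin : ∀ z ∈ N, c z = 0 ∨ c z = 1) :
    ∑ A ∈ N.powersetCard p, ∏ z ∈ A, (1 - c z)
      ≤ (Nat.choose N.card p : ℝ) * ∏ z ∈ N, (1 - c z * ((p : ℝ) / N.card)) := by
  classical
  rcases Nat.eq_zero_or_pos N.card with hn | hn
  · have hN : N = ∅ := card_eq_zero.mp hn
    have hp0 : p = 0 := by omega
    subst hN; subst hp0; simp
  set n := N.card with hnn
  set lam : ℝ := (p : ℝ) / n with hlam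
  set J := N.filter (fun z => c z = 0) with hJ
  have hJN : J ⊆ N := filter_subset _ _
  -- LHS = choose J.card p
  have hLHS : ∑ A ∈ N.powersetCard p, ∏ z ∈ A, (1 - c z) = (Nat.choose J.card p : ℝ) := by
    have h1 : ∀ A ∈ N.powersetCard p, ∏ z ∈ A, (1 - c z) = if A ⊆ J then 1 else 0 := by
      intro A hA
      rw [mem_powersetCard] at hA
      by_cases hsub : A ⊆ J
      · rw [if_pos hsub]
        apply prod_eq_one
        intro z hz
        have := (mem_filter.mp (hsub hz)).2
        simp [this]
      · rw [if_neg hsub]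
        obtain ⟨z, hzA, hzJ⟩ := not_subset.mp hsub
        apply prod_eq_zero hzA
        have hzN := hA.1 hzA
        rcases hbin z hzN with h | h
        · exact absurd (mem_filter.mpr ⟨hzN, h⟩) hzJ
        · simp [h]
    rw [sum_congr rfl h1, ← sum_filter]
    have : (N.powersetCard p).filter (fun A => A ⊆ J) = J.powersetCard p := by
      ext A
      simp only [mem_filter, mem_powersetCard]
      constructor
      · rintro ⟨⟨_, hc⟩, hs⟩; exact ⟨hs, hc⟩
      · rintro ⟨hs, hc⟩; exact ⟨⟨hs.trans hJN, hc⟩, hs⟩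
    rw [this, sum_const, card_powersetCard]
    simp
  -- RHS product = (1-lam)^(n - J.card)
  have hRHS : ∏ z ∈ N, (1 - c z * lam) = (1 - lam) ^ (n - J.card) := by
    rw [← prod_filter_mul_prod_filter_not N (fun z => c z = 0)]
    have e1 : ∏ z ∈ N.filter (fun z => c z = 0), (1 - c z * lam) = 1 := by
      apply prod_eq_one; intro z hz; have := (mem_filter.mp hz).2; simp [this]
    have e2 : ∏ z ∈ N.filter (fun z => ¬ c z = 0), (1 - c z * lam) = (1 - lam) ^ (n - J.card) := by
      have hcard : (N.filter (fun z => ¬ c z = 0)).card = n - J.card := by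
        have h := card_filter_add_card_filter_not (s := N) (p := fun z => c z = 0)
        rw [← hJ] at h
        omega
      rw [prod_congr rfl (fun z hz => ?_), prod_const, hcard]
      have hzm := mem_filter.mp hz
      rcases hbin z hzm.1 with h | h
      · exact absurd h hzm.2
      · rw [h, one_mul]
    rw [e1, e2, one_mul]
  rw [hLHS, hRHS]
  exact binom_real n p J.card hp (card_le_card hJN) hn

lemma lemmaW {ι : Type*} [DecidableEq ι] (N : Finset ι) (p : ℕ) (hp : p ≤ N.card)
    (c : ι → ℝ) (hc0 : ∀ z, 0 ≤ c z) (hc1 : ∀ z, c z ≤ 1) :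
    ∑ A ∈ N.powersetCard p, ∏ z ∈ A, (1 - c z)
      ≤ (Nat.choose N.card p : ℝ) * ∏ z ∈ N, (1 - c z * ((p : ℝ) / N.card)) := by
  classical
  have main : ∀ T : Finset ι, ∀ c : ι → ℝ, (∀ z, 0 ≤ c z) → (∀ z, c z ≤ 1) →
      (∀ z ∈ N, z ∉ T → c z = 0 ∨ c z = 1) →
      ∑ A ∈ N.powersetCard p, ∏ z ∈ A, (1 - c z)
        ≤ (Nat.choose N.card p : ℝ) * ∏ z ∈ N, (1 - c z * ((p : ℝ) / N.card)) := by
    intro T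
    induction T using Finset.induction_on with
    | empty =>
      intro c hc0 hc1 hbin
      exact lemmaW_binary N p hp c hc0 hc1 (fun z hz => hbin z hz (notMem_empty z))
    | @insert a T ha ih =>
      intro c hc0 hc1 hbin
      by_cases haN : a ∈ N
      · set lam : ℝ := (p : ℝ) / N.card with hlam
        -- affine interpolation in coordinate a
        have hLaff : ∀ t : ℝ,
            ∑ A ∈ N.powersetCard p, ∏ z ∈ A, (1 - Function.update c a t z)
            = (1 - t) * (∑ A ∈ N.powersetCard p, ∏ z ∈ A, (1 - Function.update c a 0 z))
              + t * (∑ A ∈ N.powersetCard p, ∏ z ∈ A, (1 - Function.update c a 1 z)) := by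
          have hterm : ∀ t : ℝ, ∀ A ∈ N.powersetCard p,
              ∏ z ∈ A, (1 - Function.update c a t z)
              = if a ∈ A then (1 - t) * ∏ z ∈ A.erase a, (1 - c z)
                else ∏ z ∈ A, (1 - c z) := by
            intro t A hA
            by_cases haA : a ∈ A
            · rw [if_pos haA, ← Finset.mul_prod_erase A _ haA, Function.update_self]
              congr 1
              apply prod_congr rfl
              intro z hz
              rw [Function.update_of_ne (ne_of_mem_erase hz)]
            · rw [if_neg haA]
              apply prod_congr rfl
              intro z hz
              rw [Function.update_of_ne (by rintro rfl; exact haA hz)]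
          set X : ℝ := ∑ A ∈ (N.powersetCard p).filter (fun A => a ∈ A),
              ∏ z ∈ A.erase a, (1 - c z) with hX
          set Y : ℝ := ∑ A ∈ (N.powersetCard p).filter (fun A => ¬ a ∈ A),
              ∏ z ∈ A, (1 - c z) with hY
          have split : ∀ t : ℝ,
              ∑ A ∈ N.powersetCard p, ∏ z ∈ A, (1 - Function.update c a t z)
              = (1 - t) * X + Y := by
            intro t
            rw [sum_congr rfl (hterm t),
               ← sum_filter_add_sum_filter_not (N.powersetCard p) (fun A => a ∈ A)]
            rw [sum_congr rfl (fun A hA => if_pos (mem_filter.mp hA).2),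
                sum_congr rfl (fun A (hA : A ∈ _) => if_neg (mem_filter.mp hA).2)]
            rw [← mul_sum, hX, hY]
          intro t
          rw [split t, split 0, split 1]
          ring
        -- RHS affine
        set W : ℝ := ∏ z ∈ N.erase a, (1 - c z * lam) with hW
        have hRaff : ∀ t : ℝ,
            ∏ z ∈ N, (1 - Function.update c a t z * lam) = (1 - t * lam) * W := by
          intro t
          rw [← Finset.mul_prod_erase N _ haN, Function.update_self]
          congr 1
          apply prod_congr rfl
          intro z hz
          rw [Function.update_of_ne (ne_of_mem_erase hz)]
        -- endpoint bounds from IH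
        have hbin' : ∀ t : ℝ, t = 0 ∨ t = 1 → ∀ z ∈ N, z ∉ T →
            Function.update c a t z = 0 ∨ Function.update c a t z = 1 := by
          intro t ht z hz hzT
          by_cases hza : z = a
          · subst hza; rw [Function.update_self]; exact ht
          · rw [Function.update_of_ne hza]
            exact hbin z hz (by simp [hza, hzT])
        have hu0 : ∀ t : ℝ, 0 ≤ t → t ≤ 1 → (∀ z, 0 ≤ Function.update c a t z) := by
          intro t ht0 ht1 z
          by_cases hza : z = a
          · subst hza; rw [Function.update_self]; exact ht0
          · rw [Function.update_of_ne hza]; exact hc0 z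
        have hu1 : ∀ t : ℝ, 0 ≤ t → t ≤ 1 → (∀ z, Function.update c a t z ≤ 1) := by
          intro t ht0 ht1 z
          by_cases hza : z = a
          · subst hza; rw [Function.update_self]; exact ht1
          · rw [Function.update_of_ne hza]; exact hc1 z
        have h0 := ih (Function.update c a 0) (hu0 0 le_rfl zero_le_one)
          (hu1 0 le_rfl zero_le_one) (hbin' 0 (Or.inl rfl))
        have h1 := ih (Function.update c a 1) (hu0 1 zero_le_one le_rfl)
          (hu1 1 zero_le_one le_rfl) (hbin' 1 (Or.inr rfl))
        rw [hRaff 0] at h0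
        rw [hRaff 1] at h1
        have hkey := hLaff (c a)
        rw [Function.update_eq_self] at hkey
        have hRc : ∏ z ∈ N, (1 - c z * lam) = (1 - c a * lam) * W := by
          rw [← Finset.mul_prod_erase N _ haN]
        rw [hkey, hRc]
        have hca0 := hc0 a
        have hca1 := hc1 a
        calc (1 - c a) * (∑ A ∈ N.powersetCard p, ∏ z ∈ A, (1 - Function.update c a 0 z))
              + c a * (∑ A ∈ N.powersetCard p, ∏ z ∈ A, (1 - Function.update c a 1 z))
            ≤ (1 - c a) * ((Nat.choose N.card p : ℝ) * ((1 - 0 * lam) * W))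
              + c a * ((Nat.choose N.card p : ℝ) * ((1 - 1 * lam) * W)) := by
              exact add_le_add (mul_le_mul_of_nonneg_left h0 (by linarith))
                (mul_le_mul_of_nonneg_left h1 hca0)
          _ = (Nat.choose N.card p : ℝ) * ((1 - c a * lam) * W) := by ring
      · -- a ∉ N : hypothesis already binary off T
        apply ih c hc0 hc1
        intro z hz hzT
        apply hbin z hz
        simp only [mem_insert]
        rintro (rfl | h)
        · exact haN hz
        · exact hzT h
  exact main N c hc0 hc1 (fun z hz hzN => absurd hz hzN)

section
variable {m κ : ℕ}

lemma part_inter {P : Fin κ → Finset (Fin m)}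
    (hdisj : ∀ i j, i ≠ j → Disjoint (P i) (P j))
    (g : Fin κ → Finset (Fin m)) (hg : ∀ i, g i ⊆ P i) (i : Fin κ) :
    Finset.univ.biUnion g ∩ P i = g i := by
  ext z
  simp only [mem_inter, mem_biUnion, mem_univ, true_and]
  constructor
  · rintro ⟨⟨j, hzj⟩, hzi⟩
    rcases eq_or_ne j i with rfl | hne
    · exact hzj
    · exact absurd hzi (Finset.disjoint_left.mp (hdisj j i hne) (hg j hzj))
  · intro hz
    exact ⟨⟨i, hz⟩, hg i hz⟩

lemma fact_prod (P : Fin κ → Finset (Fin m)) (pv : Fin κ → ℕ)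
    (hdisj : ∀ i j, i ≠ j → Disjoint (P i) (P j))
    (hcover : ∀ z : Fin m, ∃ i, z ∈ P i)
    (f : Fin κ → Finset (Fin m) → ℝ) :
    ∑ U ∈ Finset.univ.filter (fun U : Finset (Fin m) => ∀ i, (U ∩ P i).card = pv i),
        ∏ i, f i (U ∩ P i)
      = ∏ i, ∑ A ∈ (P i).powersetCard (pv i), f i A := by
  classical
  rw [Finset.prod_univ_sum]
  apply Finset.sum_nbij' (i := fun U => fun i => U ∩ P i)
    (j := fun g => Finset.univ.biUnion g)
  · intro U hU
    rw [Fintype.mem_piFinset]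
    intro i
    rw [mem_powersetCard]
    exact ⟨inter_subset_right, (mem_filter.mp hU).2 i⟩
  · intro g hg
    rw [Fintype.mem_piFinset] at hg
    have hsub : ∀ i, g i ⊆ P i := fun i => (mem_powersetCard.mp (hg i)).1
    rw [mem_filter]
    refine ⟨mem_univ _, fun i => ?_⟩
    rw [part_inter hdisj g hsub i]
    exact (mem_powersetCard.mp (hg i)).2
  · intro U hU
    ext z
    simp only [mem_biUnion, mem_univ, true_and, mem_inter]
    constructor
    · rintro ⟨i, hz, _⟩; exact hz
    · intro hz
      obtain ⟨i, hi⟩ := hcover z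
      exact ⟨i, hz, hi⟩
  · intro g hg
    rw [Fintype.mem_piFinset] at hg
    funext i
    exact part_inter hdisj g (fun i => (mem_powersetCard.mp (hg i)).1) i
  · intro U hU; rfl

lemma prod_partition {β : Type*} [CommMonoid β] (P : Fin κ → Finset (Fin m))
    (hdisj : ∀ i j, i ≠ j → Disjoint (P i) (P j))
    (hcover : ∀ z : Fin m, ∃ i, z ∈ P i)
    (T : Finset (Fin m)) (h : Fin m → β) :
    ∏ z ∈ T, h z = ∏ i, ∏ z ∈ T ∩ P i, h z := by
  classical
  have hT : T = Finset.univ.biUnion (fun i => T ∩ P i) := by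
    ext z
    simp only [mem_biUnion, mem_univ, true_and, mem_inter]
    constructor
    · intro hz; obtain ⟨i, hi⟩ := hcover z; exact ⟨i, hz, hi⟩
    · rintro ⟨i, hz, _⟩; exact hz
  have hpd : (↑(Finset.univ : Finset (Fin κ)) : Set (Fin κ)).PairwiseDisjoint (fun i => T ∩ P i) := by
    intro i _ j _ hij
    exact (hdisj i j hij).mono inter_subset_right inter_subset_right
  conv_lhs => rw [hT]
  rw [Finset.prod_biUnion hpd]

lemma sum_partition (P : Fin κ → Finset (Fin m))
    (hdisj : ∀ i j, i ≠ j → Disjoint (P i) (P j))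
    (hcover : ∀ z : Fin m, ∃ i, z ∈ P i)
    (T : Finset (Fin m)) (h : Fin m → ℝ) :
    ∑ z ∈ T, h z = ∑ i, ∑ z ∈ T ∩ P i, h z := by
  classical
  have hT : T = Finset.univ.biUnion (fun i => T ∩ P i) := by
    ext z
    simp only [mem_biUnion, mem_univ, true_and, mem_inter]
    constructor
    · intro hz; obtain ⟨i, hi⟩ := hcover z; exact ⟨i, hz, hi⟩
    · rintro ⟨i, hz, _⟩; exact hz
  have hpd : (↑(Finset.univ : Finset (Fin κ)) : Set (Fin κ)).PairwiseDisjoint (fun i => T ∩ P i) := by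
    intro i _ j _ hij
    exact (hdisj i j hij).mono inter_subset_right inter_subset_right
  conv_lhs => rw [hT]
  rw [Finset.sum_biUnion hpd]

end

lemma stepA {m k' : ℕ} (Q : Fin k' → Finset (Fin m)) (qvec : Fin k' → ℕ)
    (hQdisj : ∀ i j, i ≠ j → Disjoint (Q i) (Q j))
    (hQcover : ∀ z : Fin m, ∃ i, z ∈ Q i)
    (hqle : ∀ i, qvec i ≤ (Q i).card)
    (β : Fin m → ℝ) (hβ : ∀ i', ∀ z ∈ Q i', β z = (qvec i' : ℝ) / (Q i').card)
    (T : Finset (Fin m)) :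
    ∑ U' ∈ Finset.univ.filter
        (fun U' : Finset (Fin m) => ∀ i', (U' ∩ Q i').card = qvec i'),
        ∏ z ∈ T, (if z ∈ U' then (0:ℝ) else 1)
      ≤ (∏ i', ((Q i').card.choose (qvec i') : ℝ)) * ∏ z ∈ T, (1 - β z) := by
  classical
  have hrw : ∀ U' : Finset (Fin m), ∏ z ∈ T, (if z ∈ U' then (0:ℝ) else 1)
      = ∏ i', (fun i' A => ∏ z ∈ T ∩ Q i', (if z ∈ A then (0:ℝ) else 1)) i' (U' ∩ Q i') := by
    intro U'
    rw [prod_partition Q hQdisj hQcover T]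
    apply prod_congr rfl
    intro i' _
    apply prod_congr rfl
    intro z hz
    have hzQ : z ∈ Q i' := (mem_inter.mp hz).2
    congr 1
    simp [mem_inter, hzQ]
  rw [sum_congr rfl (fun U' _ => hrw U'), fact_prod Q qvec hQdisj hQcover (fun i' A => ∏ z ∈ T ∩ Q i', if z ∈ A then (0:ℝ) else 1)]
  have key : ∀ i', ∑ A ∈ (Q i').powersetCard (qvec i'),
        ∏ z ∈ T ∩ Q i', (if z ∈ A then (0:ℝ) else 1)
      ≤ ((Q i').card.choose (qvec i') : ℝ) * ∏ z ∈ T ∩ Q i', (1 - β z) := by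
    intro i'
    have hterm : ∀ A ∈ (Q i').powersetCard (qvec i'),
        ∏ z ∈ T ∩ Q i', (if z ∈ A then (0:ℝ) else 1)
        = if (T ∩ Q i') ∩ A = ∅ then 1 else 0 := by
      intro A _
      by_cases hdis : (T ∩ Q i') ∩ A = ∅
      · rw [if_pos hdis]
        apply prod_eq_one
        intro z hz
        have hzA : z ∉ A := fun h => (notMem_empty z (hdis ▸ mem_inter.mpr ⟨hz, h⟩))
        simp [hzA]
      · rw [if_neg hdis]
        obtain ⟨z, hz⟩ := nonempty_iff_ne_empty.mpr hdis
        have hz1 := (mem_inter.mp hz).1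
        have hz2 := (mem_inter.mp hz).2
        exact prod_eq_zero hz1 (by simp [hz2])
    rw [sum_congr rfl hterm, ← sum_filter]
    have hfe : ((Q i').powersetCard (qvec i')).filter (fun A => (T ∩ Q i') ∩ A = ∅)
        = (Q i' \ T).powersetCard (qvec i') := by
      ext A
      simp only [mem_filter, mem_powersetCard]
      constructor
      · rintro ⟨⟨hsub, hc⟩, hdis⟩
        refine ⟨fun z hz => mem_sdiff.mpr ⟨hsub hz, fun hzT => ?_⟩, hc⟩
        exact notMem_empty z (hdis ▸ mem_inter.mpr ⟨mem_inter.mpr ⟨hzT, hsub hz⟩, hz⟩)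
      · rintro ⟨hsub, hc⟩
        refine ⟨⟨fun z hz => (mem_sdiff.mp (hsub hz)).1, hc⟩, ?_⟩
        rw [eq_empty_iff_forall_notMem]
        intro z hz
        have h1 := mem_inter.mp (mem_inter.mp hz).1
        exact (mem_sdiff.mp (hsub (mem_inter.mp hz).2)).2 h1.1
    rw [hfe, sum_const, card_powersetCard]
    simp only [nsmul_eq_mul, mul_one]
    rcases Nat.eq_zero_or_pos (Q i').card with hn | hn
    · have hQe : Q i' = ∅ := card_eq_zero.mp hn
      have hq0 : qvec i' = 0 := by have := hqle i'; omega
      simp [hQe, hq0]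
    · have hj : (Q i' \ T).card ≤ (Q i').card := card_le_card (sdiff_subset)
      have hbr := binom_real (Q i').card (qvec i') (Q i' \ T).card (hqle i') hj hn
      have hcard : (Q i').card - (Q i' \ T).card = (T ∩ Q i').card := by
        have h1 := card_sdiff_add_card_inter (Q i') T
        rw [inter_comm]
        omega
      rw [hcard] at hbr
      refine hbr.trans (le_of_eq ?_)
      congr 1
      rw [prod_congr rfl (fun z hz => by
        rw [hβ i' z (mem_inter.mp hz).2]), prod_const]
  calc ∏ i', ∑ A ∈ (Q i').powersetCard (qvec i'),
          ∏ z ∈ T ∩ Q i', (if z ∈ A then (0:ℝ) else 1)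
      ≤ ∏ i', (((Q i').card.choose (qvec i') : ℝ) * ∏ z ∈ T ∩ Q i', (1 - β z)) := by
        apply prod_le_prod
        · intro i' _
          apply sum_nonneg
          intro A _
          apply prod_nonneg
          intro z _
          split <;> norm_num
        · intro i' _
          exact key i'
    _ = (∏ i', ((Q i').card.choose (qvec i') : ℝ)) * ∏ z ∈ T, (1 - β z) := by
        rw [prod_mul_distrib]
        congr 1
        rw [prod_partition Q hQdisj hQcover T]

lemma stepB {m k : ℕ} (P : Fin k → Finset (Fin m)) (pvec : Fin k → ℕ)
    (hPdisj : ∀ i j, i ≠ j → Disjoint (P i) (P j))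
    (hPcover : ∀ z : Fin m, ∃ i, z ∈ P i)
    (hple : ∀ i, pvec i ≤ (P i).card)
    (α β : Fin m → ℝ) (hα : ∀ i, ∀ z ∈ P i, α z = (pvec i : ℝ) / (P i).card)
    (hβ0 : ∀ z, 0 ≤ β z) (hβ1 : ∀ z, β z ≤ 1)
    (S : Finset (Fin m)) :
    ∑ U ∈ Finset.univ.filter
        (fun U : Finset (Fin m) => ∀ i, (U ∩ P i).card = pvec i),
        ∏ z ∈ S ∩ U, (1 - β z)
      ≤ (∏ i, ((P i).card.choose (pvec i) : ℝ)) * ∏ z ∈ S, (1 - α z * β z) := by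
  classical
  set c : Fin m → ℝ := fun z => if z ∈ S then β z else 0 with hc
  have hc0 : ∀ z, 0 ≤ c z := by intro z; rw [hc]; dsimp; split; exacts [hβ0 z, le_rfl]
  have hc1 : ∀ z, c z ≤ 1 := by intro z; rw [hc]; dsimp; split; exacts [hβ1 z, zero_le_one]
  have hrw : ∀ U : Finset (Fin m), ∏ z ∈ S ∩ U, (1 - β z)
      = ∏ i, (fun i A => ∏ z ∈ A, (1 - c z)) i (U ∩ P i) := by
    intro U
    rw [prod_partition P hPdisj hPcover (S ∩ U)]
    apply prod_congr rfl
    intro i _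
    have hset : S ∩ U ∩ P i = (U ∩ P i) ∩ S := by
      ext z; simp only [mem_inter]; tauto
    rw [hset]
    dsimp only
    rw [← prod_subset (inter_subset_left : (U ∩ P i) ∩ S ⊆ U ∩ P i)
      (fun z _ hz => by
        have hzS : z ∉ S := fun hzS' => hz (mem_inter.mpr ⟨‹z ∈ U ∩ P i›, hzS'⟩)
        simp [hc, hzS])]
    apply prod_congr rfl
    intro z hz
    have hzS : z ∈ S := (mem_inter.mp hz).2
    simp [hc, hzS]
  rw [sum_congr rfl (fun U _ => hrw U),
    fact_prod P pvec hPdisj hPcover (fun i A => ∏ z ∈ A, (1 - c z))]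
  have key : ∀ i, ∑ A ∈ (P i).powersetCard (pvec i), ∏ z ∈ A, (1 - c z)
      ≤ ((P i).card.choose (pvec i) : ℝ) * ∏ z ∈ S ∩ P i, (1 - α z * β z) := by
    intro i
    refine (lemmaW (P i) (pvec i) (hple i) c hc0 hc1).trans (le_of_eq ?_)
    congr 1
    rw [← prod_subset (inter_subset_right : S ∩ P i ⊆ P i)
      (fun z hzP hz => by
        have hzS : z ∉ S := fun hzS' => hz (mem_inter.mpr ⟨hzS', hzP⟩)
        simp [hc, hzS])]
    apply prod_congr rfl
    intro z hz
    have hzS : z ∈ S := (mem_inter.mp hz).1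
    have hzP : z ∈ P i := (mem_inter.mp hz).2
    rw [hα i z hzP]
    simp [hc, hzS, mul_comm]
  calc ∏ i, ∑ A ∈ (P i).powersetCard (pvec i), ∏ z ∈ A, (1 - c z)
      ≤ ∏ i, (((P i).card.choose (pvec i) : ℝ) * ∏ z ∈ S ∩ P i, (1 - α z * β z)) := by
        apply prod_le_prod
        · intro i _
          apply sum_nonneg
          intro A _
          apply prod_nonneg
          intro z _
          linarith [hc1 z]
        · intro i _; exact key i
    _ = (∏ i, ((P i).card.choose (pvec i) : ℝ)) * ∏ z ∈ S, (1 - α z * β z) := by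
        rw [prod_mul_distrib]
        congr 1
        rw [prod_partition P hPdisj hPcover S]

lemma NC {m k k' : ℕ} (P : Fin k → Finset (Fin m)) (pvec : Fin k → ℕ)
    (Q : Fin k' → Finset (Fin m)) (qvec : Fin k' → ℕ)
    (hPdisj : ∀ i j, i ≠ j → Disjoint (P i) (P j))
    (hPcover : ∀ z : Fin m, ∃ i, z ∈ P i)
    (hple : ∀ i, pvec i ≤ (P i).card)
    (hQdisj : ∀ i j, i ≠ j → Disjoint (Q i) (Q j))
    (hQcover : ∀ z : Fin m, ∃ i, z ∈ Q i)
    (hqle : ∀ i, qvec i ≤ (Q i).card)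
    (α β : Fin m → ℝ)
    (hα : ∀ i, ∀ z ∈ P i, α z = (pvec i : ℝ) / (P i).card)
    (hβ : ∀ i', ∀ z ∈ Q i', β z = (qvec i' : ℝ) / (Q i').card)
    (hβ0 : ∀ z, 0 ≤ β z) (hβ1 : ∀ z, β z ≤ 1)
    (S : Finset (Fin m)) :
    ∑ U ∈ Finset.univ.filter
        (fun U : Finset (Fin m) => ∀ i, (U ∩ P i).card = pvec i),
      ∑ U' ∈ Finset.univ.filter
        (fun U' : Finset (Fin m) => ∀ i', (U' ∩ Q i').card = qvec i'),
        ∏ z ∈ S, (if z ∈ U ∩ U' then (0:ℝ) else 1)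
      ≤ (∏ i, ((P i).card.choose (pvec i) : ℝ)) *
          (∏ i', ((Q i').card.choose (qvec i') : ℝ)) * ∏ z ∈ S, (1 - α z * β z) := by
  classical
  have inner : ∀ U : Finset (Fin m),
      ∑ U' ∈ Finset.univ.filter
        (fun U' : Finset (Fin m) => ∀ i', (U' ∩ Q i').card = qvec i'),
        ∏ z ∈ S, (if z ∈ U ∩ U' then (0:ℝ) else 1)
      ≤ (∏ i', ((Q i').card.choose (qvec i') : ℝ)) * ∏ z ∈ S ∩ U, (1 - β z) := by
    intro U
    have hrw : ∀ U' : Finset (Fin m),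
        ∏ z ∈ S, (if z ∈ U ∩ U' then (0:ℝ) else 1)
        = ∏ z ∈ S ∩ U, (if z ∈ U' then (0:ℝ) else 1) := by
      intro U'
      rw [← prod_subset (inter_subset_left : S ∩ U ⊆ S)
        (fun z hzS hz => by
          have hzU : z ∉ U := fun hzU' => hz (mem_inter.mpr ⟨hzS, hzU'⟩)
          have : z ∉ U ∩ U' := fun h => hzU (mem_inter.mp h).1
          simp [this])]
      apply prod_congr rfl
      intro z hz
      have hzU : z ∈ U := (mem_inter.mp hz).2
      congr 1
      simp [mem_inter, hzU]
    rw [sum_congr rfl (fun U' _ => hrw U')]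
    exact stepA Q qvec hQdisj hQcover hqle β hβ (S ∩ U)
  calc ∑ U ∈ Finset.univ.filter
        (fun U : Finset (Fin m) => ∀ i, (U ∩ P i).card = pvec i),
      ∑ U' ∈ Finset.univ.filter
        (fun U' : Finset (Fin m) => ∀ i', (U' ∩ Q i').card = qvec i'),
        ∏ z ∈ S, (if z ∈ U ∩ U' then (0:ℝ) else 1)
      ≤ ∑ U ∈ Finset.univ.filter
        (fun U : Finset (Fin m) => ∀ i, (U ∩ P i).card = pvec i),
          (∏ i', ((Q i').card.choose (qvec i') : ℝ)) * ∏ z ∈ S ∩ U, (1 - β z) :=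
        sum_le_sum (fun U _ => inner U)
    _ = (∏ i', ((Q i').card.choose (qvec i') : ℝ)) *
        ∑ U ∈ Finset.univ.filter
          (fun U : Finset (Fin m) => ∀ i, (U ∩ P i).card = pvec i),
          ∏ z ∈ S ∩ U, (1 - β z) := by rw [mul_sum]
    _ ≤ (∏ i', ((Q i').card.choose (qvec i') : ℝ)) *
        ((∏ i, ((P i).card.choose (pvec i) : ℝ)) * ∏ z ∈ S, (1 - α z * β z)) := by
        apply mul_le_mul_of_nonneg_left
          (stepB P pvec hPdisj hPcover hple α β hα hβ0 hβ1 S)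
        apply prod_nonneg; intro i' _; positivity
    _ = (∏ i, ((P i).card.choose (pvec i) : ℝ)) *
          (∏ i', ((Q i').card.choose (qvec i') : ℝ)) * ∏ z ∈ S, (1 - α z * β z) := by
        ring

set_option maxHeartbeats 2000000 in
theorem pc_intersection_concentration (m k k' : ℕ)
    (P : Fin k → Finset (Fin m)) (pvec : Fin k → ℕ)
    (Q : Fin k' → Finset (Fin m)) (qvec : Fin k' → ℕ)
    (hPdisj : ∀ i j, i ≠ j → Disjoint (P i) (P j))
    (hPcover : ∀ z : Fin m, ∃ i, z ∈ P i)
    (hple : ∀ i, pvec i ≤ (P i).card)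
    (hQdisj : ∀ i j, i ≠ j → Disjoint (Q i) (Q j))
    (hQcover : ∀ z : Fin m, ∃ i, z ∈ Q i)
    (hqle : ∀ i, qvec i ≤ (Q i).card)
    (F F' : Finset (Finset (Fin m)))
    (hF : F = Finset.univ.filter (fun U : Finset (Fin m) => ∀ i, (U ∩ P i).card = pvec i))
    (hF' : F' = Finset.univ.filter
      (fun U : Finset (Fin m) => ∀ i, (U ∩ Q i).card = qvec i))
    (Δ : ℝ)
    (hΔ : Δ = ∑ i ∈ Finset.univ.filter (fun i : Fin k => 0 < (P i).card),
            ∑ i' ∈ Finset.univ.filter (fun i' : Fin k' => 0 < (Q i').card),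
              (pvec i : ℝ) * (qvec i' : ℝ) * ((P i ∩ Q i').card : ℝ) /
                (((P i).card : ℝ) * ((Q i').card : ℝ)))
    (ε : ℝ) (hε : 0 < ε) :
    (((F ×ˢ F').filter
        (fun UU => ((UU.1 ∩ UU.2).card : ℝ) < Δ - ε * m)).card : ℝ) /
        ((F.card : ℝ) * (F'.card : ℝ))
      ≤ Real.exp (-(ε ^ 2) * ((m : ℝ) - Δ) / 3) := by
  classical
  subst hF hF'
  set F : Finset (Finset (Fin m)) :=
    Finset.univ.filter (fun U : Finset (Fin m) => ∀ i, (U ∩ P i).card = pvec i) with hF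
  set F' : Finset (Finset (Fin m)) :=
    Finset.univ.filter (fun U : Finset (Fin m) => ∀ i, (U ∩ Q i).card = qvec i) with hF'
  -- the marginal probability functions
  set α : Fin m → ℝ :=
    fun z => (pvec ((hPcover z).choose) : ℝ) / ((P ((hPcover z).choose)).card : ℝ) with hαdef
  set β : Fin m → ℝ :=
    fun z => (qvec ((hQcover z).choose) : ℝ) / ((Q ((hQcover z).choose)).card : ℝ) with hβdef
  have hα : ∀ i, ∀ z ∈ P i, α z = (pvec i : ℝ) / (P i).card := by
    intro i z hz
    have hz' : z ∈ P ((hPcover z).choose) := (hPcover z).choose_spec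
    rcases eq_or_ne i ((hPcover z).choose) with h | h
    · subst h; simp [hαdef]
    · exact absurd hz' (Finset.disjoint_left.mp (hPdisj i _ h) hz)
  have hβ : ∀ i', ∀ z ∈ Q i', β z = (qvec i' : ℝ) / (Q i').card := by
    intro i z hz
    have hz' : z ∈ Q ((hQcover z).choose) := (hQcover z).choose_spec
    rcases eq_or_ne i ((hQcover z).choose) with h | h
    · subst h; simp [hβdef]
    · exact absurd hz' (Finset.disjoint_left.mp (hQdisj i _ h) hz)
  have hα0 : ∀ z, 0 ≤ α z := fun z => by rw [hαdef]; positivity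
  have hβ0 : ∀ z, 0 ≤ β z := fun z => by rw [hβdef]; positivity
  have hα1 : ∀ z, α z ≤ 1 := by
    intro z
    rw [hαdef]
    have hz' : z ∈ P ((hPcover z).choose) := (hPcover z).choose_spec
    have hpos : 0 < (P ((hPcover z).choose)).card := card_pos.mpr ⟨z, hz'⟩
    apply div_le_one_of_le₀
    · exact_mod_cast hple _
    · positivity
  have hβ1 : ∀ z, β z ≤ 1 := by
    intro z
    rw [hβdef]
    have hz' : z ∈ Q ((hQcover z).choose) := (hQcover z).choose_spec
    have hpos : 0 < (Q ((hQcover z).choose)).card := card_pos.mpr ⟨z, hz'⟩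
    apply div_le_one_of_le₀
    · exact_mod_cast hqle _
    · positivity
  -- Δ = ∑ over elements
  have hΔ' : Δ = ∑ z : Fin m, α z * β z := by
    rw [hΔ]
    have houter : ∑ i ∈ Finset.univ.filter (fun i : Fin k => 0 < (P i).card),
        ∑ i' ∈ Finset.univ.filter (fun i' : Fin k' => 0 < (Q i').card),
          (pvec i : ℝ) * (qvec i' : ℝ) * ((P i ∩ Q i').card : ℝ) /
            (((P i).card : ℝ) * ((Q i').card : ℝ))
        = ∑ i : Fin k, ∑ i' : Fin k',
          (pvec i : ℝ) * (qvec i' : ℝ) * ((P i ∩ Q i').card : ℝ) /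
            (((P i).card : ℝ) * ((Q i').card : ℝ)) := by
      rw [sum_subset (filter_subset _ _)]
      · apply sum_congr rfl
        intro i _
        rw [sum_subset (filter_subset _ _)]
        intro i' _ hi'
        simp only [mem_filter, mem_univ, true_and, not_lt, Nat.le_zero] at hi'
        have : Q i' = ∅ := card_eq_zero.mp hi'
        simp [this]
      · intro i _ hi
        simp only [mem_filter, mem_univ, true_and, not_lt, Nat.le_zero] at hi
        have : P i = ∅ := card_eq_zero.mp hi
        simp [this]
    rw [houter]
    rw [sum_partition P hPdisj hPcover univ (fun z => α z * β z)]
    apply sum_congr rfl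
    intro i _
    rw [univ_inter, sum_partition Q hQdisj hQcover (P i) (fun z => α z * β z)]
    apply sum_congr rfl
    intro i' _
    rcases (P i ∩ Q i').eq_empty_or_nonempty with he | hne
    · simp [he]
    · have hval : ∀ z ∈ P i ∩ Q i', α z * β z
          = (pvec i : ℝ) / (P i).card * ((qvec i' : ℝ) / (Q i').card) := by
        intro z hz
        rw [hα i z (mem_inter.mp hz).1, hβ i' z (mem_inter.mp hz).2]
      rw [sum_congr rfl hval, sum_const, nsmul_eq_mul]
      ring
  set μ : ℝ := (m : ℝ) - Δ with hμdef
  have hγ01 : ∀ z, 0 ≤ α z * β z ∧ α z * β z ≤ 1 := by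
    intro z
    constructor
    · exact mul_nonneg (hα0 z) (hβ0 z)
    · calc α z * β z ≤ 1 * 1 := mul_le_mul (hα1 z) (hβ1 z) (hβ0 z) zero_le_one
        _ = 1 := by ring
  have hΔ0 : 0 ≤ Δ := by rw [hΔ']; exact sum_nonneg fun z _ => (hγ01 z).1
  have hΔm : Δ ≤ m := by
    rw [hΔ']
    calc ∑ z : Fin m, α z * β z ≤ ∑ _z : Fin m, (1:ℝ) :=
          sum_le_sum fun z _ => (hγ01 z).2
      _ = m := by simp
  have hμsum : ∑ z : Fin m, (1 - α z * β z) = μ := by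
    rw [sum_sub_distrib, ← hΔ']
    simp [hμdef]
  have hμ0 : 0 ≤ μ := by rw [hμdef]; linarith
  have hμm : μ ≤ m := by rw [hμdef]; linarith
  -- cardinalities
  have hFcard : (F.card : ℝ) = ∏ i, ((P i).card.choose (pvec i) : ℝ) := by
    have h := fact_prod P pvec hPdisj hPcover (fun _ _ => (1:ℝ))
    simpa [card_powersetCard] using h
  have hFcard' : (F'.card : ℝ) = ∏ i', ((Q i').card.choose (qvec i') : ℝ) := by
    have h := fact_prod Q qvec hQdisj hQcover (fun _ _ => (1:ℝ))
    simpa [card_powersetCard] using h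
  have hFpos : (0:ℝ) < (F.card : ℝ) := by
    rw [hFcard]
    exact prod_pos fun i _ => by exact_mod_cast Nat.choose_pos (hple i)
  have hFpos' : (0:ℝ) < (F'.card : ℝ) := by
    rw [hFcard']
    exact prod_pos fun i _ => by exact_mod_cast Nat.choose_pos (hqle i)
  rcases le_or_gt ε 1 with hε1 | hε1
  · -- main case
    set Bad := (F ×ˢ F').filter
      (fun UU => ((UU.1 ∩ UU.2).card : ℝ) < Δ - ε * m) with hBad
    set CC : ℝ := (F.card : ℝ) * (F'.card : ℝ) with hCC
    have hCCpos : 0 < CC := mul_pos hFpos hFpos'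
    have hexp_up : ∑ U ∈ F, ∑ U' ∈ F',
        ∏ z : Fin m, (ε * (if z ∈ U ∩ U' then (0:ℝ) else 1) + 1)
        ≤ CC * Real.exp (ε * μ) := by
      have hexpand : ∀ U U' : Finset (Fin m),
          ∏ z : Fin m, (ε * (if z ∈ U ∩ U' then (0:ℝ) else 1) + 1)
          = ∑ S ∈ (univ : Finset (Fin m)).powerset,
              ε ^ S.card * ∏ z ∈ S, (if z ∈ U ∩ U' then (0:ℝ) else 1) := by
        intro U U'
        rw [Finset.prod_add]
        apply sum_congr rfl
        intro S _
        rw [prod_const_one, mul_one, prod_mul_distrib, prod_const]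
      calc ∑ U ∈ F, ∑ U' ∈ F',
            ∏ z : Fin m, (ε * (if z ∈ U ∩ U' then (0:ℝ) else 1) + 1)
          = ∑ S ∈ (univ : Finset (Fin m)).powerset, ∑ U ∈ F, ∑ U' ∈ F',
              ε ^ S.card * ∏ z ∈ S, (if z ∈ U ∩ U' then (0:ℝ) else 1) := by
            rw [sum_congr rfl (fun U (_ : U ∈ F) =>
              sum_congr rfl (fun U' (_ : U' ∈ F') => hexpand U U'))]
            rw [sum_congr rfl (fun U (_ : U ∈ F) => Finset.sum_comm), Finset.sum_comm]
        _ ≤ ∑ S ∈ (univ : Finset (Fin m)).powerset,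
              ε ^ S.card * ((∏ i, ((P i).card.choose (pvec i) : ℝ)) *
                (∏ i', ((Q i').card.choose (qvec i') : ℝ)) *
                  ∏ z ∈ S, (1 - α z * β z)) := by
            apply sum_le_sum
            intro S _
            have hpull : ∑ U ∈ F, ∑ U' ∈ F',
                ε ^ S.card * ∏ z ∈ S, (if z ∈ U ∩ U' then (0:ℝ) else 1)
                = ε ^ S.card * ∑ U ∈ F, ∑ U' ∈ F',
                    ∏ z ∈ S, (if z ∈ U ∩ U' then (0:ℝ) else 1) := by
              rw [mul_sum]
              exact sum_congr rfl fun U _ => by rw [mul_sum]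
            rw [hpull]
            exact mul_le_mul_of_nonneg_left
              (NC P pvec Q qvec hPdisj hPcover hple hQdisj hQcover hqle
                α β hα hβ hβ0 hβ1 S)
              (pow_nonneg hε.le _)
        _ = CC * ∏ z : Fin m, (ε * (1 - α z * β z) + 1) := by
            rw [Finset.prod_add, mul_sum]
            apply sum_congr rfl
            intro S _
            rw [prod_const_one, mul_one, prod_mul_distrib, prod_const]
            rw [hCC, hFcard, hFcard']
            ring
        _ ≤ CC * Real.exp (ε * μ) := by
            apply mul_le_mul_of_nonneg_left _ hCCpos.le
            calc ∏ z : Fin m, (ε * (1 - α z * β z) + 1)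
                ≤ ∏ z : Fin m, Real.exp (ε * (1 - α z * β z)) := by
                  apply prod_le_prod
                  · intro z _
                    have := (hγ01 z).2
                    nlinarith [hε.le]
                  · intro z _
                    linarith [Real.add_one_le_exp (ε * (1 - α z * β z))]
              _ = Real.exp (∑ z : Fin m, ε * (1 - α z * β z)) := by
                  rw [Real.exp_sum]
              _ = Real.exp (ε * μ) := by rw [← mul_sum, hμsum]
    have hlow : (Bad.card : ℝ) * (1+ε) ^ (μ + ε * m) ≤
        ∑ U ∈ F, ∑ U' ∈ F',
          ∏ z : Fin m, (ε * (if z ∈ U ∩ U' then (0:ℝ) else 1) + 1) := by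
      rw [← Finset.sum_product'
        (f := fun U U' => ∏ z : Fin m, (ε * (if z ∈ U ∩ U' then (0:ℝ) else 1) + 1))]
      have hterm : ∀ w ∈ Bad, (1+ε) ^ (μ + ε * m) ≤
          ∏ z : Fin m, (ε * (if z ∈ w.1 ∩ w.2 then (0:ℝ) else 1) + 1) := by
        intro w hw
        obtain ⟨hwΩ, hwlt⟩ := mem_filter.mp hw
        have hint : (w.1 ∩ w.2).card ≤ m := by
          simpa using card_le_univ (w.1 ∩ w.2)
        have hprod : ∏ z : Fin m, (ε * (if z ∈ w.1 ∩ w.2 then (0:ℝ) else 1) + 1)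
            = (1+ε) ^ (m - (w.1 ∩ w.2).card) := by
          rw [← prod_filter_mul_prod_filter_not univ (fun z => z ∈ w.1 ∩ w.2)]
          have h1 : ∏ z ∈ univ.filter (fun z => z ∈ w.1 ∩ w.2),
              (ε * (if z ∈ w.1 ∩ w.2 then (0:ℝ) else 1) + 1) = 1 := by
            apply prod_eq_one
            intro z hz
            have := (mem_filter.mp hz).2
            simp [this]
          have hc : (univ.filter (fun z => ¬ z ∈ w.1 ∩ w.2)).card
              = m - (w.1 ∩ w.2).card := by
            have h := card_filter_add_card_filter_not
              (s := (univ : Finset (Fin m))) (p := fun z => z ∈ w.1 ∩ w.2)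
            have h2 : (univ.filter (fun z => z ∈ w.1 ∩ w.2)) = w.1 ∩ w.2 := by
              ext z; simp
            rw [h2] at h
            have h3 : (univ : Finset (Fin m)).card = m := by simp
            omega
          have h2 : ∏ z ∈ univ.filter (fun z => ¬ z ∈ w.1 ∩ w.2),
              (ε * (if z ∈ w.1 ∩ w.2 then (0:ℝ) else 1) + 1)
              = (1+ε) ^ (m - (w.1 ∩ w.2).card) := by
            rw [prod_congr rfl (fun z hz => ?_), prod_const, hc]
            have := (mem_filter.mp hz).2
            simp [this]; ring
          rw [h1, h2, one_mul]
        rw [hprod]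
        have hcast : ((m - (w.1 ∩ w.2).card : ℕ) : ℝ)
            = (m : ℝ) - ((w.1 ∩ w.2).card : ℝ) := by
          push_cast [Nat.cast_sub hint]; ring
        calc (1+ε) ^ (μ + ε * m)
            ≤ (1+ε) ^ (((m - (w.1 ∩ w.2).card : ℕ) : ℝ)) := by
              apply Real.rpow_le_rpow_of_exponent_le (by linarith)
              rw [hcast, hμdef]
              linarith
          _ = (1+ε) ^ (m - (w.1 ∩ w.2).card) := Real.rpow_natCast _ _
      calc (Bad.card : ℝ) * (1+ε) ^ (μ + ε * m)
          = ∑ _w ∈ Bad, (1+ε) ^ (μ + ε * m) := by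
            rw [sum_const, nsmul_eq_mul]
        _ ≤ ∑ w ∈ Bad,
            ∏ z : Fin m, (ε * (if z ∈ w.1 ∩ w.2 then (0:ℝ) else 1) + 1) :=
            sum_le_sum hterm
        _ ≤ ∑ w ∈ F ×ˢ F',
            ∏ z : Fin m, (ε * (if z ∈ w.1 ∩ w.2 then (0:ℝ) else 1) + 1) := by
            apply sum_le_sum_of_subset_of_nonneg (filter_subset _ _)
            intro w _ _
            apply prod_nonneg
            intro z _
            split_ifs <;> nlinarith [hε.le]
    have hcomb : (Bad.card : ℝ) * (1+ε) ^ (μ + ε * m) ≤ CC * Real.exp (ε * μ) :=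
      hlow.trans hexp_up
    have hrpos : (0:ℝ) < (1+ε) ^ (μ + ε * m) :=
      Real.rpow_pos_of_pos (by linarith) _
    have hexp_ineq : Real.exp (ε * μ) / (1+ε) ^ (μ + ε * m)
        ≤ Real.exp (-(ε^2) * μ / 3) := by
      rw [Real.rpow_def_of_pos (by linarith : (0:ℝ) < 1+ε), ← Real.exp_sub]
      apply Real.exp_le_exp.mpr
      set L := Real.log (1+ε) with hL
      clear_value L
      clear_value μ
      have hL2 : 2*ε/(2+ε) ≤ L := hL ▸ log_pade hε.le
      have hL0 : 0 ≤ L := le_trans (by positivity) hL2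
      have c1 : L*(μ + ε*μ) ≤ L*(μ + ε*m) := by
        nlinarith [mul_nonneg hL0 (mul_nonneg hε.le (sub_nonneg.mpr hμm))]
      have c2 : (2*ε/(2+ε))*(μ + ε*μ) ≤ L*(μ + ε*μ) :=
        mul_le_mul_of_nonneg_right hL2 (by nlinarith [hμ0, hε.le])
      have c3 : ε*μ + ε^2*μ/3 ≤ (2*ε/(2+ε))*(μ + ε*μ) := by
        rw [← sub_nonneg]
        have heq : (2*ε/(2+ε))*(μ + ε*μ) - (ε*μ + ε^2*μ/3)
            = ε^2 * (1-ε) * μ / (3*(2+ε)) := by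
          field_simp
          ring
        rw [heq]
        apply div_nonneg (mul_nonneg (mul_nonneg (by positivity) (by linarith)) hμ0)
          (by linarith)
      linarith only [c1, c2, c3]
    rw [div_le_iff₀ hCCpos]
    calc (Bad.card : ℝ)
        ≤ CC * Real.exp (ε*μ) / (1+ε) ^ (μ + ε*m) := by
          rw [le_div_iff₀ hrpos]; exact hcomb
      _ = CC * (Real.exp (ε*μ) / (1+ε) ^ (μ + ε*m)) := by ring
      _ ≤ CC * Real.exp (-(ε^2) * μ / 3) :=
          mul_le_mul_of_nonneg_left hexp_ineq hCCpos.le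
      _ = Real.exp (-(ε^2) * ((m:ℝ) - Δ) / 3) * CC := by rw [hμdef]; ring
  · -- trivial case : the bad event is empty
    have hempty : (F ×ˢ F').filter
        (fun UU => ((UU.1 ∩ UU.2).card : ℝ) < Δ - ε * m) = ∅ := by
      rw [filter_eq_empty_iff]
      intro w _
      rw [not_lt]
      have h1 : ε * m ≥ m := by nlinarith [Nat.cast_nonneg (α := ℝ) m]
      have : Δ - ε * m ≤ 0 := by linarith
      exact this.trans (by positivity)
    rw [hempty]
    simp only [card_empty, Nat.cast_zero, zero_div]
    positivity
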